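/- Taylor–Proudman theorem in ℝ⁴ with fast simple rotation: let λ₁ ∈ ℝ with λ₁ ≠ 0, let u : ℝ⁴ → ℝ⁴ be continuously differentiable and Π : ℝ⁴ → ℝ twice continuously differentiable such that 2λ₁(−u₂(x), u₁(x), 0, 0) = −∇Π(x) for all x ∈ ℝ⁴. Then everywhere: u_{1,1} + u_{2,2} = 0 (horizontal incompressibility in the rotating plane) and u_{1,3} = u_{1,4} = u_{2,3} = u_{2,4} = 0 (cylinder conditions: the horizontal velocity (u₁, u₂) is independent of both axes x₃, x₄ perpendicular to the rotating plane), while no constraint is imposed on u₃ or u₄. -/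

import Mathlib

/-- The partial derivative `∂ᵢ f` of a scalar function on `ℝ^n` at `x`. -/
noncomputable def pd {n : ℕ} (i : Fin n) (f : (Fin n → ℝ) → ℝ) (x : Fin n → ℝ) : ℝ :=
  fderiv ℝ f x (Pi.single i 1)

lemma pd_pd_eq {f : (Fin 4 → ℝ) → ℝ} (hf : ContDiff ℝ 2 f) (i j : Fin 4) (x : Fin 4 → ℝ) :
    pd i (fun y => pd j f y) x = fderiv ℝ (fderiv ℝ f) x (Pi.single i 1) (Pi.single j 1) := by
  have hd : DifferentiableAt ℝ (fderiv ℝ f) x :=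
    ((hf.fderiv_right (m := 1) le_rfl).differentiable one_ne_zero) x
  have : fderiv ℝ (fun y => fderiv ℝ f y (Pi.single j 1)) x
      = ((fderiv ℝ f x).comp (fderiv ℝ (fun _ : Fin 4 → ℝ => (Pi.single j 1 : Fin 4 → ℝ)) x))
        + (fderiv ℝ (fderiv ℝ f) x).flip (Pi.single j 1) :=
    fderiv_clm_apply hd (differentiableAt_const _)
  simp only [pd, this, fderiv_fun_const]
  simp

lemma pd_symm {f : (Fin 4 → ℝ) → ℝ} (hf : ContDiff ℝ 2 f) (i j : Fin 4) (x : Fin 4 → ℝ) :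
    pd i (fun y => pd j f y) x = pd j (fun y => pd i f y) x := by
  rw [pd_pd_eq hf, pd_pd_eq hf]
  exact (hf.contDiffAt.isSymmSndFDerivAt (by norm_num)) _ _

lemma pd_diff {f : (Fin 4 → ℝ) → ℝ} (hf : ContDiff ℝ 2 f) (j : Fin 4) :
    Differentiable ℝ (fun y => pd j f y) := by
  have := ((hf.fderiv_right (m := 1) le_rfl).differentiable one_ne_zero)
  exact this.clm_apply (differentiable_const _)

lemma pd_const_mul {f : (Fin 4 → ℝ) → ℝ} (hf : DifferentiableAt ℝ f x) (c : ℝ) (i : Fin 4) :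
    pd i (fun y => c * f y) x = c * pd i f x := by
  simp only [pd, fderiv_const_mul hf c]; rfl

/-- Taylor–Proudman theorem in `ℝ⁴` with fast simple rotation (rate
`λ₁ ≠ 0` in the `x₁`-`x₂` plane): geostrophic balance implies horizontal
incompressibility in the rotating plane and the cylinder conditions — the horizontal
velocity `(u₁, u₂)` is independent of both axes `x₃, x₄` (0-indexed coordinates). -/
theorem taylor_proudman_R4_simple_rotation
    (lam₁ : ℝ) (h₁ : lam₁ ≠ 0)
    (u : (Fin 4 → ℝ) → (Fin 4 → ℝ)) (hu : ContDiff ℝ 1 u)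
    (Pr : (Fin 4 → ℝ) → ℝ) (hPr : ContDiff ℝ 2 Pr)
    (hbal : ∀ x : Fin 4 → ℝ,
      2 * lam₁ * (-(u x 1)) = -(pd 0 Pr x) ∧
      2 * lam₁ * u x 0 = -(pd 1 Pr x) ∧
      (0 : ℝ) = -(pd 2 Pr x) ∧
      (0 : ℝ) = -(pd 3 Pr x)) :
    ∀ x : Fin 4 → ℝ,
      pd 0 (fun y => u y 0) x + pd 1 (fun y => u y 1) x = 0 ∧
      pd 2 (fun y => u y 0) x = 0 ∧
      pd 3 (fun y => u y 0) x = 0 ∧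
      pd 2 (fun y => u y 1) x = 0 ∧
      pd 3 (fun y => u y 1) x = 0 := by
  have h2l : (2 : ℝ) * lam₁ ≠ 0 := by positivity
  have hu0 : (fun y => u y 0) = fun y => (-(2 * lam₁)⁻¹) * pd 1 Pr y := by
    funext y
    have := (hbal y).2.1
    field_simp
    linarith
  have hu1 : (fun y => u y 1) = fun y => (2 * lam₁)⁻¹ * pd 0 Pr y := by
    funext y
    have := (hbal y).1
    field_simp
    linarith
  have hP2 : (fun y => pd 2 Pr y) = fun _ => (0 : ℝ) := by
    funext y; have := (hbal y).2.2.1; linarith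
  have hP3 : (fun y => pd 3 Pr y) = fun _ => (0 : ℝ) := by
    funext y; have := (hbal y).2.2.2; linarith
  intro x
  have key : ∀ i j : Fin 4, pd i (fun y => u y 0) x = -(2 * lam₁)⁻¹ * pd i (fun y => pd 1 Pr y) x ∧
      pd i (fun y => u y 1) x = (2 * lam₁)⁻¹ * pd i (fun y => pd 0 Pr y) x := by
    intro i j
    constructor
    · rw [hu0]; exact pd_const_mul (pd_diff hPr 1 x) _ i
    · rw [hu1]; exact pd_const_mul (pd_diff hPr 0 x) _ i
  have pdzero : ∀ i : Fin 4, pd i (fun _ : Fin 4 → ℝ => (0 : ℝ)) x = 0 := by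
    intro i; simp [pd]
  refine ⟨?_, ?_, ?_, ?_, ?_⟩
  · rw [(key 0 0).1, (key 1 1).2, pd_symm hPr 1 0]
    ring
  · rw [(key 2 0).1, pd_symm hPr 2 1, hP2, pdzero]; ring
  · rw [(key 3 0).1, pd_symm hPr 3 1, hP3, pdzero]; ring
  · rw [(key 2 0).2, pd_symm hPr 2 0, hP2, pdzero]; ring
  · rw [(key 3 0).2, pd_symm hPr 3 0, hP3, pdzero]; ring
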